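/- Under the same setup with ε' = 1/(9p), if λ̃_s^{-1} ≤ Δ/5, λ̃_{q+1}^{-1} - λ̃_q^{-1} ≥ (5/9)Δ, and λ̃_{i+1}^{-1} - λ̃_i^{-1} < (5/9)Δ for all s ≤ i < q (minimality of q), then λ_q - λ_{q+1} ≥ Δ/9. -/

import Mathlib

theorem stmt_9 (lam : ℝ) (lamv tl : ℕ → ℝ) (s q k p : ℕ) (Delta : ℝ)
    (hsq : s ≤ q) (hqk : q < k) (hp : k ≤ p) (hppos : 0 < p)
    (hDelta : 0 < Delta)
    (hmono : ∀ i, s ≤ i → i < k → lamv (i+1) ≤ lamv i)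
    (hshift : lam > lamv s)
    (htlpos : ∀ i, s ≤ i → i ≤ k → 0 < tl i)
    (happrox : ∀ i, s ≤ i → i ≤ k →
      (1 - 1/(9*(p:ℝ))) * (lam - lamv i)⁻¹ ≤ tl i ∧
      tl i ≤ (1 - 1/(9*(p:ℝ)))⁻¹ * (lam - lamv i)⁻¹)
    (hstart : (tl s)⁻¹ ≤ Delta / 5)
    (hgapq : (tl (q+1))⁻¹ - (tl q)⁻¹ ≥ (5/9) * Delta)
    (hmin : ∀ i, s ≤ i → i < q → (tl (i+1))⁻¹ - (tl i)⁻¹ < (5/9) * Delta) :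
    lamv q - lamv (q+1) ≥ Delta / 9 := by
  set ε : ℝ := 1/(9*(p:ℝ)) with hεdef
  have ht1 : (1:ℝ) ≤ (p:ℝ) := by exact_mod_cast hppos
  have hεpos : 0 < ε := by positivity
  have hεle : ε ≤ 1/9 := by
    rw [hεdef]
    rw [div_le_div_iff₀ (by positivity) (by norm_num)]
    linarith
  have hone : 0 < 1 - ε := by linarith
  have hεt : ε * (p:ℝ) = 1/9 := by
    field_simp [hεdef]
    rw [hεdef, one_div, mul_assoc, mul_comm (p:ℝ) 9, inv_mul_cancel₀ (mul_pos (by norm_num) (by exact_mod_cast hppos)).ne']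
  -- lamv i ≤ lamv s for s ≤ i ≤ k
  have hles : ∀ i, s ≤ i → i ≤ k → lamv i ≤ lamv s := by
    intro i hi
    induction i, hi using Nat.le_induction with
    | base => intro _; exact le_rfl
    | succ n hn ih =>
      intro h
      have := hmono n hn (by omega)
      have := ih (by omega)
      linarith
  have hpos : ∀ i, s ≤ i → i ≤ k → 0 < lam - lamv i := by
    intro i hi hik
    have := hles i hi hik
    linarith
  -- inverse bounds
  have hlow : ∀ i, s ≤ i → i ≤ k → (1-ε) * (lam - lamv i) ≤ (tl i)⁻¹ := by
    intro i hi hik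
    have h2 := (happrox i hi hik).2
    have := inv_anti₀ (htlpos i hi hik) h2
    calc (1-ε) * (lam - lamv i) = ((1-ε)⁻¹ * (lam - lamv i)⁻¹)⁻¹ := by
          rw [mul_inv, inv_inv, inv_inv]
      _ ≤ (tl i)⁻¹ := this
  have hhigh : ∀ i, s ≤ i → i ≤ k → (1-ε) * (tl i)⁻¹ ≤ lam - lamv i := by
    intro i hi hik
    have h1 := (happrox i hi hik).1
    have hb : 0 < (1-ε) * (lam - lamv i)⁻¹ := by
      have := hpos i hi hik; positivity
    have := inv_anti₀ hb h1
    rw [mul_inv, inv_inv] at this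
    calc (1-ε) * (tl i)⁻¹ ≤ (1-ε) * ((1-ε)⁻¹ * (lam - lamv i)) :=
          mul_le_mul_of_nonneg_left this hone.le
      _ = lam - lamv i := by field_simp
  -- inductive bound on (tl i)⁻¹
  have key : ∀ n, s ≤ n → n ≤ q → (tl n)⁻¹ ≤ Delta/5 + ((n:ℝ) - (s:ℝ)) * ((5/9)*Delta) := by
    intro n hn
    induction n, hn using Nat.le_induction with
    | base => intro _; simpa using hstart
    | succ n hn ih =>
      intro h
      have h1 := hmin n hn (by omega)
      have h2 := ih (by omega)
      push_cast
      linarith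
  have ha : (tl q)⁻¹ ≤ Delta/5 + ((q:ℝ) - (s:ℝ)) * ((5/9)*Delta) := key q hsq le_rfl
  have haup : (tl q)⁻¹ ≤ (5/9) * (p:ℝ) * Delta := by
    have hq1 : (q:ℝ) - (s:ℝ) ≤ (p:ℝ) - 1 := by
      have : (q:ℝ) + 1 ≤ (p:ℝ) := by exact_mod_cast Nat.lt_of_lt_of_le hqk hp
      have : (0:ℝ) ≤ (s:ℝ) := Nat.cast_nonneg s
      push_cast at *
      linarith
    nlinarith
  have hA := hlow q hsq (le_of_lt hqk)
  have hB := hhigh (q+1) (by omega) (by omega)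
  have ha0 : 0 < (tl q)⁻¹ := inv_pos.2 (htlpos q hsq (le_of_lt hqk))
  set a := (tl q)⁻¹
  set b := (tl (q+1))⁻¹
  -- scalar inequality
  have hscal : (1-ε) * ((lam - lamv (q+1)) - (lam - lamv q)) ≥ (1-ε) * (Delta/9) := by
    have h1 : (1-ε) * (lam - lamv (q+1)) ≥ (1-ε) * ((1-ε) * b) :=
      mul_le_mul_of_nonneg_left hB hone.le
    have h2 : b ≥ a + (5/9)*Delta := by linarith
    nlinarith [mul_le_mul_of_nonneg_left haup hεpos.le, mul_pos hεpos hDelta,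
      mul_nonneg (mul_nonneg hεpos.le hεpos.le) ha0.le,
      mul_nonneg (mul_nonneg hεpos.le hεpos.le) hDelta.le]
  have := le_of_mul_le_mul_left (by linarith [hscal] : (1-ε) * (Delta/9) ≤ (1-ε) * (lamv q - lamv (q+1))) hone
  linarith
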